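/- Let B be a unital *-algebra over ℂ, α : A → A⊗B a linear map, and α̂ := (F⊗id_B)∘α∘F⁻¹ : A* → A*⊗B. Then α̂ is *-preserving (i.e. α̂(ω*) = (*⊗*)(α̂(ω)) for all ω ∈ A*, with the involution on A* given by ω*(a) := conj(ω(S(a)*))) if and only if α preserves the convolution adjoint, i.e. α(a^•) = (•⊗*)(α(a)) for all a ∈ A, where a^• := S(a*). -/

import Mathlib

open TensorProduct

set_option linter.unusedSectionVars false

noncomputable section

namespace QAG

variable {A : Type*} [Ring A] [HopfAlgebra ℂ A] [StarRing A] [StarModule ℂ A]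
  [FiniteDimensional ℂ A]

open Coalgebra HopfAlgebra

/-- The representation of `comul (a * b)` obtained from representations of `a` and `b`. -/
def reprMul {ι κ : Type*} {a b : A} (ra : Coalgebra.Repr ℂ a ι) (rb : Coalgebra.Repr ℂ b κ) :
    Coalgebra.Repr ℂ (a * b) (ι × κ) where
  index := ra.index ×ˢ rb.index
  left p := ra.left p.1 * rb.left p.2
  right p := ra.right p.1 * rb.right p.2
  eq := by
    rw [Bialgebra.comul_mul, ← ra.eq, ← rb.eq, Finset.sum_mul_sum, Finset.sum_product]
    simp [Algebra.TensorProduct.tmul_mul_tmul]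

@[simp] lemma reprMul_index {ι κ : Type*} {a b : A} (ra : Coalgebra.Repr ℂ a ι) (rb : Coalgebra.Repr ℂ b κ) :
    (reprMul ra rb).index = ra.index ×ˢ rb.index := rfl

@[simp] lemma reprMul_left {ι κ : Type*} {a b : A} (ra : Coalgebra.Repr ℂ a ι) (rb : Coalgebra.Repr ℂ b κ) (p) :
    (reprMul ra rb).left p = ra.left p.1 * rb.left p.2 := rfl

@[simp] lemma reprMul_right {ι κ : Type*} {a b : A} (ra : Coalgebra.Repr ℂ a ι) (rb : Coalgebra.Repr ℂ b κ) (p) :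
    (reprMul ra rb).right p = ra.right p.1 * rb.right p.2 := rfl

lemma sum_counit_smul_right {ι : Type*} {a : A} (r : Coalgebra.Repr ℂ a ι) :
    ∑ i ∈ r.index, Coalgebra.counit (R := ℂ) (r.left i) • r.right i = a :=
  calc ∑ i ∈ r.index, Coalgebra.counit (R := ℂ) (r.left i) • r.right i
      = TensorProduct.lid ℂ A
          (∑ i ∈ r.index, Coalgebra.counit (R := ℂ) (r.left i) ⊗ₜ[ℂ] r.right i) := by
        rw [map_sum]; simp
    _ = TensorProduct.lid ℂ A ((1 : ℂ) ⊗ₜ[ℂ] a) := by rw [Coalgebra.sum_counit_tmul_eq r]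
    _ = a := by simp

lemma sum_counit_smul_left {ι : Type*} {a : A} (r : Coalgebra.Repr ℂ a ι) :
    ∑ i ∈ r.index, Coalgebra.counit (R := ℂ) (r.right i) • r.left i = a :=
  calc ∑ i ∈ r.index, Coalgebra.counit (R := ℂ) (r.right i) • r.left i
      = TensorProduct.rid ℂ A
          (∑ i ∈ r.index, r.left i ⊗ₜ[ℂ] Coalgebra.counit (R := ℂ) (r.right i)) := by
        rw [map_sum]; simp [TensorProduct.smul_tmul]
    _ = TensorProduct.rid ℂ A (a ⊗ₜ[ℂ] (1 : ℂ)) := by rw [Coalgebra.sum_tmul_counit_eq r]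
    _ = a := by simp

set_option maxHeartbeats 1000000 in
/-- The antipode is anti-multiplicative. -/
theorem antipode_mul_rev (a b : A) :
    antipode (R := ℂ) (a * b) = antipode (R := ℂ) b * antipode (R := ℂ) a := by
  classical
  let ra := Coalgebra.Repr.arbitrary ℂ a
  let rb := Coalgebra.Repr.arbitrary ℂ b
  let rra : (i : ra.ι) → Coalgebra.Repr ℂ (ra.right i) (A × A) :=
    fun i => Coalgebra.Repr.arbitrary ℂ _
  let rla : (i : ra.ι) → Coalgebra.Repr ℂ (ra.left i) (A × A) :=
    fun i => Coalgebra.Repr.arbitrary ℂ _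
  let rrb : (k : rb.ι) → Coalgebra.Repr ℂ (rb.right k) (A × A) :=
    fun k => Coalgebra.Repr.arbitrary ℂ _
  let rlb : (k : rb.ι) → Coalgebra.Repr ℂ (rb.left k) (A × A) :=
    fun k => Coalgebra.Repr.arbitrary ℂ _
  let S : A →ₗ[ℂ] A := antipode (R := ℂ)
  -- the three forms of the middle quadruple sum
  let T : (i : ra.ι) → (rra i).ι → (k : rb.ι) → (rrb k).ι → A := fun i j k l =>
    S (ra.left i * rb.left k) *
      (((rra i).left j * (rrb k).left l) * (S ((rrb k).right l) * S ((rra i).right j)))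
  let T2 : (i : ra.ι) → (rla i).ι → (k : rb.ι) → (rrb k).ι → A := fun i j k l =>
    S ((rla i).left j * rb.left k) *
      (((rla i).right j * (rrb k).left l) * (S ((rrb k).right l) * S (ra.right i)))
  let T3 : (i : ra.ι) → (rla i).ι → (k : rb.ι) → (rlb k).ι → A := fun i j k l =>
    S ((rla i).left j * (rlb k).left l) *
      (((rla i).right j * (rlb k).right l) * (S (rb.right k) * S (ra.right i)))
  -- Step 1 : `S (a*b)` equals the quadruple sum in the first form
  have step1 : S (a * b)
      = ∑ i ∈ ra.index, ∑ k ∈ rb.index, ∑ j ∈ (rra i).index, ∑ l ∈ (rrb k).index,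
          T i j k l := by
    have inner : ∀ i ∈ ra.index, ∀ k ∈ rb.index,
        (∑ j ∈ (rra i).index, ∑ l ∈ (rrb k).index, T i j k l)
          = (counit (R := ℂ) (ra.right i) * counit (R := ℂ) (rb.right k)) •
              S (ra.left i * rb.left k) := by
      intro i _ k _
      have hb : ∑ l ∈ (rrb k).index, (rrb k).left l * S ((rrb k).right l)
          = counit (R := ℂ) (rb.right k) • 1 := sum_mul_antipode_eq_smul (rrb k)
      have ha : ∑ j ∈ (rra i).index, (rra i).left j * S ((rra i).right j)
          = counit (R := ℂ) (ra.right i) • 1 := sum_mul_antipode_eq_smul (rra i)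
      have hjl : ∀ j ∈ (rra i).index, ∑ l ∈ (rrb k).index, T i j k l
          = counit (R := ℂ) (rb.right k) •
              (S (ra.left i * rb.left k) * ((rra i).left j * S ((rra i).right j))) := by
        intro j _
        calc ∑ l ∈ (rrb k).index, T i j k l
            = S (ra.left i * rb.left k) * ((rra i).left j *
                ((∑ l ∈ (rrb k).index, (rrb k).left l * S ((rrb k).right l)) *
                  S ((rra i).right j))) := by
              rw [Finset.sum_mul, Finset.mul_sum, Finset.mul_sum]
              refine Finset.sum_congr rfl fun l _ => ?_
              show T i j k l = _
              simp only [T, mul_assoc]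
          _ = counit (R := ℂ) (rb.right k) •
                (S (ra.left i * rb.left k) * ((rra i).left j * S ((rra i).right j))) := by
              rw [hb, smul_mul_assoc, one_mul, mul_smul_comm, mul_smul_comm]
      calc (∑ j ∈ (rra i).index, ∑ l ∈ (rrb k).index, T i j k l)
          = ∑ j ∈ (rra i).index, counit (R := ℂ) (rb.right k) •
              (S (ra.left i * rb.left k) * ((rra i).left j * S ((rra i).right j))) :=
            Finset.sum_congr rfl hjl
        _ = counit (R := ℂ) (rb.right k) • (S (ra.left i * rb.left k) *
              ∑ j ∈ (rra i).index, (rra i).left j * S ((rra i).right j)) := by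
            rw [Finset.mul_sum, Finset.smul_sum]
        _ = (counit (R := ℂ) (ra.right i) * counit (R := ℂ) (rb.right k)) •
              S (ra.left i * rb.left k) := by
            rw [ha, mul_smul_comm, mul_one, smul_smul, mul_comm]
    calc S (a * b)
        = S (∑ p ∈ (reprMul ra rb).index,
            counit (R := ℂ) ((reprMul ra rb).right p) • ((reprMul ra rb).left p)) := by
          rw [sum_counit_smul_left (reprMul ra rb)]
      _ = ∑ i ∈ ra.index, ∑ k ∈ rb.index,
            (counit (R := ℂ) (ra.right i) * counit (R := ℂ) (rb.right k)) •
              S (ra.left i * rb.left k) := by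
          rw [map_sum]
          simp only [reprMul_index, reprMul_left, reprMul_right,
            Bialgebra.counit_mul, map_smul]
          exact Finset.sum_product _ _ _
      _ = ∑ i ∈ ra.index, ∑ k ∈ rb.index, ∑ j ∈ (rra i).index, ∑ l ∈ (rrb k).index,
            T i j k l := by
          refine Finset.sum_congr rfl fun i hi => Finset.sum_congr rfl fun k hk => ?_
          rw [inner i hi k hk]
  -- the collapsing multiplication `A ⊗ (A ⊗ A) → A`
  let M2map : A ⊗[ℂ] (A ⊗[ℂ] A) →ₗ[ℂ] A :=
    LinearMap.mul' ℂ A ∘ₗ LinearMap.lTensor A (LinearMap.mul' ℂ A)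
  -- conversion in the `a` variable (coassociativity)
  have convA : ∀ (k : rb.ι), ∀ (l : (rrb k).ι),
      (∑ i ∈ ra.index, ∑ j ∈ (rra i).index, T i j k l)
        = ∑ i ∈ ra.index, ∑ j ∈ (rla i).index, T2 i j k l := by
    intro k l
    have key := Coalgebra.sum_map_tmul_tmul_eq (R := ℂ)
      (S ∘ₗ LinearMap.mulRight ℂ (rb.left k))
      (LinearMap.mulRight ℂ ((rrb k).left l))
      (LinearMap.mulLeft ℂ (S ((rrb k).right l)) ∘ₗ S)
      a (repr := ra) (a₁ := rla) (a₂ := rra)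
    have key2 := congrArg M2map key
    simp only [map_sum, M2map, LinearMap.coe_comp, Function.comp_apply,
      LinearMap.lTensor_tmul, LinearMap.mul'_apply, LinearMap.mulRight_apply,
      LinearMap.mulLeft_apply] at key2
    calc (∑ i ∈ ra.index, ∑ j ∈ (rra i).index, T i j k l)
        = ∑ i ∈ ra.index, ∑ j ∈ (rra i).index,
            S (ra.left i * rb.left k) *
              ((rra i).left j * (rrb k).left l *
                (S ((rrb k).right l) * S ((rra i).right j))) := rfl
      _ = ∑ i ∈ ra.index, ∑ j ∈ (rla i).index,
            S ((rla i).left j * rb.left k) *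
              ((rla i).right j * (rrb k).left l *
                (S ((rrb k).right l) * S (ra.right i))) := key2
      _ = ∑ i ∈ ra.index, ∑ j ∈ (rla i).index, T2 i j k l := rfl
  -- conversion in the `b` variable (coassociativity)
  have convB : ∀ (i : ra.ι), ∀ (j : (rla i).ι),
      (∑ k ∈ rb.index, ∑ l ∈ (rrb k).index, T2 i j k l)
        = ∑ k ∈ rb.index, ∑ l ∈ (rlb k).index, T3 i j k l := by
    intro i j
    have key := Coalgebra.sum_map_tmul_tmul_eq (R := ℂ)
      (S ∘ₗ LinearMap.mulLeft ℂ ((rla i).left j))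
      (LinearMap.mulLeft ℂ ((rla i).right j))
      (LinearMap.mulRight ℂ (S (ra.right i)) ∘ₗ S)
      b (repr := rb) (a₁ := rlb) (a₂ := rrb)
    have key2 := congrArg M2map key
    simp only [map_sum, M2map, LinearMap.coe_comp, Function.comp_apply,
      LinearMap.lTensor_tmul, LinearMap.mul'_apply, LinearMap.mulRight_apply,
      LinearMap.mulLeft_apply] at key2
    calc (∑ k ∈ rb.index, ∑ l ∈ (rrb k).index, T2 i j k l)
        = ∑ k ∈ rb.index, ∑ l ∈ (rrb k).index,
            S ((rla i).left j * rb.left k) *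
              ((rla i).right j * (rrb k).left l *
                (S ((rrb k).right l) * S (ra.right i))) := rfl
      _ = ∑ k ∈ rb.index, ∑ l ∈ (rlb k).index,
            S ((rla i).left j * (rlb k).left l) *
              ((rla i).right j * (rlb k).right l *
                (S (rb.right k) * S (ra.right i))) := key2
      _ = ∑ k ∈ rb.index, ∑ l ∈ (rlb k).index, T3 i j k l := rfl
  -- Step 3 : the quadruple sum in the last form equals `S b * S a`
  have step3 : (∑ i ∈ ra.index, ∑ k ∈ rb.index, ∑ j ∈ (rla i).index, ∑ l ∈ (rlb k).index,
      T3 i j k l) = S b * S a := by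
    have hSb : (∑ k ∈ rb.index, counit (R := ℂ) (rb.left k) • S (rb.right k)) = S b := by
      calc (∑ k ∈ rb.index, counit (R := ℂ) (rb.left k) • S (rb.right k))
          = S (∑ k ∈ rb.index, counit (R := ℂ) (rb.left k) • rb.right k) := by
            rw [map_sum]; simp only [map_smul]
        _ = S b := by rw [sum_counit_smul_right rb]
    have hSa : (∑ i ∈ ra.index, counit (R := ℂ) (ra.left i) • S (ra.right i)) = S a := by
      calc (∑ i ∈ ra.index, counit (R := ℂ) (ra.left i) • S (ra.right i))
          = S (∑ i ∈ ra.index, counit (R := ℂ) (ra.left i) • ra.right i) := by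
            rw [map_sum]; simp only [map_smul]
        _ = S a := by rw [sum_counit_smul_right ra]
    have inner : ∀ i ∈ ra.index, ∀ k ∈ rb.index,
        (∑ j ∈ (rla i).index, ∑ l ∈ (rlb k).index, T3 i j k l)
          = (counit (R := ℂ) (ra.left i) * counit (R := ℂ) (rb.left k)) •
              (S (rb.right k) * S (ra.right i)) := by
      intro i _ k _
      have hm : ∑ p ∈ (reprMul (rla i) (rlb k)).index,
          S ((reprMul (rla i) (rlb k)).left p) * (reprMul (rla i) (rlb k)).right p
          = counit (R := ℂ) (ra.left i * rb.left k) • (1 : A) :=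
        sum_antipode_mul_eq_smul (reprMul (rla i) (rlb k))
      calc (∑ j ∈ (rla i).index, ∑ l ∈ (rlb k).index, T3 i j k l)
          = (∑ j ∈ (rla i).index, ∑ l ∈ (rlb k).index,
              S ((rla i).left j * (rlb k).left l) *
                ((rla i).right j * (rlb k).right l)) *
              (S (rb.right k) * S (ra.right i)) := by
            rw [Finset.sum_mul]
            refine Finset.sum_congr rfl fun j _ => ?_
            rw [Finset.sum_mul]
            refine Finset.sum_congr rfl fun l _ => ?_
            show T3 i j k l = _
            simp only [T3, mul_assoc]
        _ = (∑ p ∈ (reprMul (rla i) (rlb k)).index,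
              S ((reprMul (rla i) (rlb k)).left p) * (reprMul (rla i) (rlb k)).right p) *
              (S (rb.right k) * S (ra.right i)) := by
            rw [show (∑ j ∈ (rla i).index, ∑ l ∈ (rlb k).index,
                S ((rla i).left j * (rlb k).left l) *
                  ((rla i).right j * (rlb k).right l))
              = ∑ p ∈ (reprMul (rla i) (rlb k)).index,
                  S ((reprMul (rla i) (rlb k)).left p) * (reprMul (rla i) (rlb k)).right p
              from (Finset.sum_product ((rla i).index) ((rlb k).index)
                (fun p => S ((reprMul (rla i) (rlb k)).left p) *
                  (reprMul (rla i) (rlb k)).right p)).symm]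
        _ = (counit (R := ℂ) (ra.left i * rb.left k) • (1 : A)) *
              (S (rb.right k) * S (ra.right i)) := by rw [hm]
        _ = (counit (R := ℂ) (ra.left i) * counit (R := ℂ) (rb.left k)) •
              (S (rb.right k) * S (ra.right i)) := by
            rw [Bialgebra.counit_mul, smul_mul_assoc, one_mul]
    calc (∑ i ∈ ra.index, ∑ k ∈ rb.index, ∑ j ∈ (rla i).index, ∑ l ∈ (rlb k).index,
        T3 i j k l)
        = ∑ i ∈ ra.index, ∑ k ∈ rb.index,
            (counit (R := ℂ) (ra.left i) * counit (R := ℂ) (rb.left k)) •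
              (S (rb.right k) * S (ra.right i)) :=
          Finset.sum_congr rfl fun i hi => Finset.sum_congr rfl fun k hk => inner i hi k hk
      _ = ∑ i ∈ ra.index, counit (R := ℂ) (ra.left i) •
            ((∑ k ∈ rb.index, counit (R := ℂ) (rb.left k) • S (rb.right k)) *
              S (ra.right i)) := by
          refine Finset.sum_congr rfl fun i _ => ?_
          rw [Finset.sum_mul, Finset.smul_sum]
          refine Finset.sum_congr rfl fun k _ => ?_
          rw [smul_mul_assoc, smul_smul]
      _ = ∑ i ∈ ra.index, counit (R := ℂ) (ra.left i) • (S b * S (ra.right i)) := by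
          rw [hSb]
      _ = S b * ∑ i ∈ ra.index, counit (R := ℂ) (ra.left i) • S (ra.right i) := by
          rw [Finset.mul_sum]
          refine Finset.sum_congr rfl fun i _ => ?_
          rw [mul_smul_comm]
      _ = S b * S a := by rw [hSa]
  -- reorderings of the summations
  have reorder1 :
      (∑ i ∈ ra.index, ∑ k ∈ rb.index, ∑ j ∈ (rra i).index, ∑ l ∈ (rrb k).index, T i j k l)
        = ∑ k ∈ rb.index, ∑ l ∈ (rrb k).index, ∑ i ∈ ra.index, ∑ j ∈ (rra i).index,
            T i j k l :=
    calc (∑ i ∈ ra.index, ∑ k ∈ rb.index, ∑ j ∈ (rra i).index, ∑ l ∈ (rrb k).index,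
          T i j k l)
        = ∑ k ∈ rb.index, ∑ i ∈ ra.index, ∑ j ∈ (rra i).index, ∑ l ∈ (rrb k).index,
            T i j k l := Finset.sum_comm
      _ = ∑ k ∈ rb.index, ∑ i ∈ ra.index, ∑ l ∈ (rrb k).index, ∑ j ∈ (rra i).index,
            T i j k l :=
          Finset.sum_congr rfl fun k _ => Finset.sum_congr rfl fun i _ =>
            Finset.sum_comm
      _ = ∑ k ∈ rb.index, ∑ l ∈ (rrb k).index, ∑ i ∈ ra.index, ∑ j ∈ (rra i).index,
            T i j k l :=
          Finset.sum_congr rfl fun k _ => Finset.sum_comm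
  have reorder2 :
      (∑ k ∈ rb.index, ∑ l ∈ (rrb k).index, ∑ i ∈ ra.index, ∑ j ∈ (rla i).index,
          T2 i j k l)
        = ∑ i ∈ ra.index, ∑ j ∈ (rla i).index, ∑ k ∈ rb.index, ∑ l ∈ (rrb k).index,
            T2 i j k l :=
    calc (∑ k ∈ rb.index, ∑ l ∈ (rrb k).index, ∑ i ∈ ra.index, ∑ j ∈ (rla i).index,
          T2 i j k l)
        = ∑ k ∈ rb.index, ∑ i ∈ ra.index, ∑ l ∈ (rrb k).index, ∑ j ∈ (rla i).index,
            T2 i j k l := Finset.sum_congr rfl fun k _ => Finset.sum_comm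
      _ = ∑ i ∈ ra.index, ∑ k ∈ rb.index, ∑ l ∈ (rrb k).index, ∑ j ∈ (rla i).index,
            T2 i j k l := Finset.sum_comm
      _ = ∑ i ∈ ra.index, ∑ k ∈ rb.index, ∑ j ∈ (rla i).index, ∑ l ∈ (rrb k).index,
            T2 i j k l :=
          Finset.sum_congr rfl fun i _ => Finset.sum_congr rfl fun k _ =>
            Finset.sum_comm
      _ = ∑ i ∈ ra.index, ∑ j ∈ (rla i).index, ∑ k ∈ rb.index, ∑ l ∈ (rrb k).index,
            T2 i j k l := Finset.sum_congr rfl fun i _ => Finset.sum_comm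
  have reorder3 :
      (∑ i ∈ ra.index, ∑ j ∈ (rla i).index, ∑ k ∈ rb.index, ∑ l ∈ (rlb k).index,
          T3 i j k l)
        = ∑ i ∈ ra.index, ∑ k ∈ rb.index, ∑ j ∈ (rla i).index, ∑ l ∈ (rlb k).index,
            T3 i j k l :=
    Finset.sum_congr rfl fun i _ => Finset.sum_comm
  show S (a * b) = S b * S a
  calc S (a * b)
      = ∑ i ∈ ra.index, ∑ k ∈ rb.index, ∑ j ∈ (rra i).index, ∑ l ∈ (rrb k).index,
          T i j k l := step1
    _ = ∑ k ∈ rb.index, ∑ l ∈ (rrb k).index, ∑ i ∈ ra.index, ∑ j ∈ (rra i).index,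
          T i j k l := reorder1
    _ = ∑ k ∈ rb.index, ∑ l ∈ (rrb k).index, ∑ i ∈ ra.index, ∑ j ∈ (rla i).index,
          T2 i j k l :=
        Finset.sum_congr rfl fun k _ => Finset.sum_congr rfl fun l _ => convA k l
    _ = ∑ i ∈ ra.index, ∑ j ∈ (rla i).index, ∑ k ∈ rb.index, ∑ l ∈ (rrb k).index,
          T2 i j k l := reorder2
    _ = ∑ i ∈ ra.index, ∑ j ∈ (rla i).index, ∑ k ∈ rb.index, ∑ l ∈ (rlb k).index,
          T3 i j k l :=
        Finset.sum_congr rfl fun i _ => Finset.sum_congr rfl fun j _ => convB i j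
    _ = ∑ i ∈ ra.index, ∑ k ∈ rb.index, ∑ j ∈ (rla i).index, ∑ l ∈ (rlb k).index,
          T3 i j k l := reorder3
    _ = S b * S a := step3


/-- `(h ⊗ id)` as a map `A ⊗ A → A`. -/
def hTensorId (h : A →ₗ[ℂ] ℂ) : A ⊗[ℂ] A →ₗ[ℂ] A :=
  (TensorProduct.lid ℂ A).toLinearMap ∘ₗ TensorProduct.map h LinearMap.id

/-- `(id ⊗ h)` as a map `A ⊗ A → A`. -/
def idTensorH (h : A →ₗ[ℂ] ℂ) : A ⊗[ℂ] A →ₗ[ℂ] A :=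
  (TensorProduct.rid ℂ A).toLinearMap ∘ₗ TensorProduct.map LinearMap.id h

/-- The convolution product `a ⋆ b = (h ⊗ id)(((S ⊗ id)Δ(b))·(a ⊗ 1))`. -/
def conv (h : A →ₗ[ℂ] ℂ) (a b : A) : A :=
  hTensorId h
    ((TensorProduct.map (HopfAlgebra.antipode (R := ℂ)) LinearMap.id
        (Coalgebra.comul (R := ℂ) b)) * (a ⊗ₜ[ℂ] (1 : A)))

/-- The Fourier transform `F(a) = h(·a)` as an element of the dual space. -/
def fourier (h : A →ₗ[ℂ] ℂ) (a : A) : Module.Dual ℂ A :=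
  h ∘ₗ LinearMap.mulRight ℂ a

/-- The product of the dual algebra `A*`: `(ω₁·ω₂)(c) = (ω₁ ⊗ ω₂)(Δ(c))`. -/
def dualMul (φ ψ : Module.Dual ℂ A) : Module.Dual ℂ A :=
  (TensorProduct.lid ℂ ℂ).toLinearMap ∘ₗ TensorProduct.map φ ψ ∘ₗ Coalgebra.comul (R := ℂ)


/-- The Fourier transform `F : A → A*`, `F(a) = h(·a)`, as a linear map. -/
def fourierHom (h : A →ₗ[ℂ] ℂ) : A →ₗ[ℂ] Module.Dual ℂ A :=
  ((LinearMap.mul ℂ A).flip).compr₂ h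

/-- The convolution product of `A` as a bilinear map. -/
def convBilin (h : A →ₗ[ℂ] ℂ) : A →ₗ[ℂ] A →ₗ[ℂ] A :=
  ((((LinearMap.mul ℂ (A ⊗[ℂ] A)).compl₁₂
      ((TensorProduct.map (HopfAlgebra.antipode (R := ℂ)) LinearMap.id) ∘ₗ
        Coalgebra.comul (R := ℂ))
      ((TensorProduct.mk ℂ A A).flip (1 : A))).flip).compr₂ (hTensorId h))

/-- The product of the dual algebra `A*` as a bilinear map:
`(ω₁·ω₂)(c) = (ω₁ ⊗ ω₂)(Δ(c))`. -/
def dualMulBilin : Module.Dual ℂ A →ₗ[ℂ] Module.Dual ℂ A →ₗ[ℂ] Module.Dual ℂ A :=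
  (TensorProduct.mapBilinear (σ₁₂ := RingHom.id ℂ) (M := A) (N := A) (M₂ := ℂ) (N₂ := ℂ)).compr₂
    ((LinearMap.llcomp ℂ A (ℂ ⊗[ℂ] ℂ) ℂ (TensorProduct.lid ℂ ℂ).toLinearMap) ∘ₗ
      (LinearMap.lcomp ℂ (ℂ ⊗[ℂ] ℂ) (Coalgebra.comul (R := ℂ))))

section tensor
variable {B : Type*} [Ring B] [Algebra ℂ B]

/-- The product on `A ⊗ B` given by the convolution product `⋆` on the first tensor
factor and the multiplication of `B` on the second. -/
def convMulTensor (h : A →ₗ[ℂ] ℂ) :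
    (A ⊗[ℂ] B) →ₗ[ℂ] (A ⊗[ℂ] B) →ₗ[ℂ] (A ⊗[ℂ] B) :=
  TensorProduct.map₂ (convBilin h) (LinearMap.mul ℂ B)

/-- The product on `A* ⊗ B` given by the dual-algebra product on the first tensor
factor and the multiplication of `B` on the second. -/
def dualMulTensor :
    (Module.Dual ℂ A ⊗[ℂ] B) →ₗ[ℂ] (Module.Dual ℂ A ⊗[ℂ] B) →ₗ[ℂ] (Module.Dual ℂ A ⊗[ℂ] B) :=
  TensorProduct.map₂ dualMulBilin (LinearMap.mul ℂ B)

end tensor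

/-- The convolution adjoint `a^• = S(a*)`. -/
def bullet (a : A) : A := HopfAlgebra.antipode (R := ℂ) (star a)

/-- The involution of the dual algebra `A*`: `ω*(a) = conj (ω (S(a)*))`. -/
def dualStar (ω : Module.Dual ℂ A) : Module.Dual ℂ A where
  toFun a := starRingEnd ℂ (ω (star (HopfAlgebra.antipode (R := ℂ) a)))
  map_add' a b := by simp [star_add]
  map_smul' c a := by
    simp [map_smul, star_smul, mul_comm]

lemma dualStar_apply (ω : Module.Dual ℂ A) (x : A) :
    dualStar ω x = starRingEnd ℂ (ω (star (HopfAlgebra.antipode (R := ℂ) x))) := rfl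

lemma dualStar_zero : dualStar (0 : Module.Dual ℂ A) = 0 := by
  ext x; simp [dualStar_apply]

lemma dualStar_add (ω η : Module.Dual ℂ A) :
    dualStar (ω + η) = dualStar ω + dualStar η := by
  ext x; simp [dualStar_apply]

lemma dualStar_smul (c : ℂ) (ω : Module.Dual ℂ A) :
    dualStar (c • ω) = (starRingEnd ℂ c) • dualStar ω := by
  ext x; simp [dualStar_apply]

section starT
variable {B : Type*} [AddCommGroup B] [Module ℂ B] [StarAddMonoid B] [StarModule ℂ B]

/-- `dualStar ⊗ star` as an additive map on the tensor product. -/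
def starT : Module.Dual ℂ A ⊗[ℂ] B →+ Module.Dual ℂ A ⊗[ℂ] B :=
  TensorProduct.liftAddHom
    { toFun := fun φ =>
        { toFun := fun q => dualStar φ ⊗ₜ[ℂ] star q
          map_zero' := by simp
          map_add' := fun q q' => by
            show dualStar φ ⊗ₜ[ℂ] star (q + q')
              = dualStar φ ⊗ₜ[ℂ] star q + dualStar φ ⊗ₜ[ℂ] star q'
            rw [star_add, TensorProduct.tmul_add] }
      map_zero' := by ext q; simp [dualStar_zero]
      map_add' := fun φ ψ => by ext q; simp [dualStar_add, TensorProduct.add_tmul] }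
    (fun c φ q => by
      simp only [AddMonoidHom.coe_mk, ZeroHom.coe_mk]
      rw [dualStar_smul, TensorProduct.smul_tmul, star_smul, starRingEnd_apply])

@[simp] lemma starT_tmul (φ : Module.Dual ℂ A) (q : B) :
    starT (φ ⊗ₜ[ℂ] q) = dualStar φ ⊗ₜ[ℂ] star q :=
  TensorProduct.liftAddHom_tmul _ _ φ q

end starT

/-- `α̂ = (F ⊗ id) ∘ α ∘ F⁻¹` is `*`-preserving (for the involution
`ω*(a) = conj (ω (S(a)*))` on `A*` and the involution `* ⊗ *` on `A* ⊗ B`) iff `α`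
preserves the convolution adjoint `a^• = S(a*)` (i.e. `α ∘ • = (• ⊗ *) ∘ α`).
The (antilinear, hence not expressible by `TensorProduct.map`) maps `* ⊗ *` and
`• ⊗ *` on the tensor products are expressed through arbitrary finite
representations by simple tensors. -/
theorem dual_map_star_preserving_iff_convolution_adjoint_preserved
    (h : A →ₗ[ℂ] ℂ)
    -- the antipode is an involution commuting with the `*`-operation
    (hSS : ∀ a : A, HopfAlgebra.antipode (R := ℂ) (HopfAlgebra.antipode (R := ℂ) a) = a)
    (hSstar : ∀ a : A, HopfAlgebra.antipode (R := ℂ) (star a)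
      = star (HopfAlgebra.antipode (R := ℂ) a))
    -- `h` is faithful, hermitian, tracial, `S`-invariant and (bi-)invariant
    (hfaithful : ∀ a : A, h (star a * a) = 0 → a = 0)
    (hhermitian : ∀ a : A, h (star a) = starRingEnd ℂ (h a))
    (htracial : ∀ a b : A, h (a * b) = h (b * a))
    (hSinv : ∀ a : A, h (HopfAlgebra.antipode (R := ℂ) a) = h a)
    (hinvl : ∀ a : A, hTensorId h (Coalgebra.comul (R := ℂ) a) = h a • (1 : A))
    (hinvr : ∀ a : A, idTensorH h (Coalgebra.comul (R := ℂ) a) = h a • (1 : A))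
    -- strong invariance
    (hstrong : ∀ b c : A,
      HopfAlgebra.antipode (R := ℂ)
          (idTensorH h ((Coalgebra.comul (R := ℂ) b) * ((1 : A) ⊗ₜ[ℂ] c)))
        = idTensorH h (((1 : A) ⊗ₜ[ℂ] b) * Coalgebra.comul (R := ℂ) c))
    {B : Type*} [Ring B] [Algebra ℂ B] [StarRing B] [StarModule ℂ B]
    (α : A →ₗ[ℂ] A ⊗[ℂ] B)
    (αhat : Module.Dual ℂ A →ₗ[ℂ] Module.Dual ℂ A ⊗[ℂ] B)
    -- `α̂ = (F ⊗ id) ∘ α ∘ F⁻¹`, i.e. `α̂ ∘ F = (F ⊗ id) ∘ α`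
    (hαhat : ∀ a : A,
      αhat (fourierHom h a)
        = TensorProduct.map (fourierHom h) LinearMap.id (α a)) :
    (∀ (ω : Module.Dual ℂ A) (n : ℕ) (φ : Fin n → Module.Dual ℂ A) (q : Fin n → B),
        αhat ω = ∑ i, φ i ⊗ₜ[ℂ] q i →
          αhat (dualStar ω) = ∑ i, dualStar (φ i) ⊗ₜ[ℂ] star (q i))
      ↔ (∀ (a : A) (n : ℕ) (u : Fin n → A) (q : Fin n → B),
          α a = ∑ i, u i ⊗ₜ[ℂ] q i →
            α (bullet a) = ∑ i, bullet (u i) ⊗ₜ[ℂ] star (q i)) := by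
  classical
  have hkey : ∀ c x : A, h (c * HopfAlgebra.antipode (R := ℂ) x)
      = h (x * HopfAlgebra.antipode (R := ℂ) c) := by
    intro c x
    calc h (c * HopfAlgebra.antipode (R := ℂ) x)
        = h (HopfAlgebra.antipode (R := ℂ) (c * HopfAlgebra.antipode (R := ℂ) x)) :=
          (hSinv _).symm
      _ = h (HopfAlgebra.antipode (R := ℂ) (HopfAlgebra.antipode (R := ℂ) x) *
            HopfAlgebra.antipode (R := ℂ) c) := by rw [antipode_mul_rev]
      _ = h (x * HopfAlgebra.antipode (R := ℂ) c) := by rw [hSS]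
  have hdstar : ∀ a : A, dualStar (fourierHom h a) = fourierHom h (bullet a) := by
    intro a
    ext x
    calc dualStar (fourierHom h a) x
        = starRingEnd ℂ (h (star (HopfAlgebra.antipode (R := ℂ) x) * a)) := rfl
      _ = h (star (star (HopfAlgebra.antipode (R := ℂ) x) * a)) := (hhermitian _).symm
      _ = h (star a * HopfAlgebra.antipode (R := ℂ) x) := by rw [star_mul, star_star]
      _ = h (x * HopfAlgebra.antipode (R := ℂ) (star a)) := hkey _ _
      _ = fourierHom h (bullet a) x := rfl
  have hFinj : Function.Injective (fourierHom h) := by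
    rw [← LinearMap.ker_eq_bot, LinearMap.ker_eq_bot']
    intro a ha
    refine hfaithful a ?_
    have := congrArg (fun g : Module.Dual ℂ A => g (star a)) ha
    simpa [fourierHom] using this
  have hFsurj : Function.Surjective (fourierHom h) :=
    (LinearMap.injective_iff_surjective_of_finrank_eq_finrank
      (Subspace.dual_finrank_eq (K := ℂ) (V := A)).symm).mp hFinj
  let e : A ≃ₗ[ℂ] Module.Dual ℂ A := LinearEquiv.ofBijective (fourierHom h) ⟨hFinj, hFsurj⟩
  have hmapinj : Function.Injective
      (TensorProduct.map (fourierHom h) (LinearMap.id (R := ℂ) (M := B))) := by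
    have heq : TensorProduct.map (fourierHom h) (LinearMap.id (R := ℂ) (M := B))
        = (TensorProduct.congr e (LinearEquiv.refl ℂ B)).toLinearMap := by
      apply TensorProduct.ext'
      intro x y
      simp [e, TensorProduct.congr_tmul]
      rfl
    rw [heq]
    exact (TensorProduct.congr e (LinearEquiv.refl ℂ B)).injective
  constructor
  · intro H a n u q hq
    have h1 : αhat (fourierHom h a) = ∑ i, fourierHom h (u i) ⊗ₜ[ℂ] q i := by
      rw [hαhat, hq, map_sum]
      refine Finset.sum_congr rfl fun i _ => ?_
      rw [TensorProduct.map_tmul]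
      rfl
    have h2 := H (fourierHom h a) n (fun i => fourierHom h (u i)) q h1
    rw [hdstar a, hαhat] at h2
    apply hmapinj
    rw [h2, map_sum]
    refine Finset.sum_congr rfl fun i _ => ?_
    rw [TensorProduct.map_tmul, hdstar]
    rfl
  · intro H ω n φ q hq
    obtain ⟨a, rfl⟩ := hFsurj ω
    obtain ⟨s, hs⟩ := TensorProduct.exists_finset (R := ℂ) (α a)
    let eqv := s.equivFin
    let u : Fin s.card → A := fun i => (eqv.symm i).1.1
    let r : Fin s.card → B := fun i => (eqv.symm i).1.2
    have hrep : α a = ∑ i, u i ⊗ₜ[ℂ] r i :=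
      calc α a = ∑ p ∈ s, p.1 ⊗ₜ[ℂ] p.2 := hs
        _ = ∑ p : {x // x ∈ s}, (p : A × B).1 ⊗ₜ[ℂ] (p : A × B).2 :=
            (Finset.sum_coe_sort s _).symm
        _ = ∑ i, u i ⊗ₜ[ℂ] r i :=
            (Equiv.sum_comp eqv.symm
              (fun p : {x // x ∈ s} => (p : A × B).1 ⊗ₜ[ℂ] (p : A × B).2)).symm
    have h2 := H a s.card u r hrep
    have hmain : αhat (dualStar (fourierHom h a))
        = ∑ i, dualStar (fourierHom h (u i)) ⊗ₜ[ℂ] star (r i) := by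
      rw [hdstar, hαhat, h2, map_sum]
      refine Finset.sum_congr rfl fun i _ => ?_
      rw [TensorProduct.map_tmul, hdstar]
      rfl
    have hq' : (∑ i, fourierHom h (u i) ⊗ₜ[ℂ] r i) = ∑ i, φ i ⊗ₜ[ℂ] q i := by
      rw [← hq, hαhat, hrep, map_sum]
      refine Finset.sum_congr rfl fun i _ => ?_
      rw [TensorProduct.map_tmul]
      rfl
    have hst := congrArg (starT (A := A) (B := B)) hq'
    simp only [map_sum, starT_tmul] at hst
    rw [hmain, hst]
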